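/- arXiv:2206.07206 — 2 statements merged into one kernel-verified Lean document; each statement's English description precedes it below -/
import Mathlib

section
/- Let m < n be positive natural numbers. Let M be a second-countable smooth manifold of dimension m (modeled on EuclideanSpace ℝ (Fin m)), and let f : M → EuclideanSpace ℝ (Fin n) be a C^1 map. Then the range of f is a Lebesgue-null set, i.e. the Lebesgue measure (volume) of Set.range f in EuclideanSpace ℝ (Fin n) is zero. -/
set_option maxHeartbeats 1000000

open Metric Manifold MeasureTheory
open scoped ENNReal NNReal

noncomputable section

/-- The range of a `C^1` map from a second-countable smooth `m`-manifold to
`EuclideanSpace ℝ (Fin n)`, with `m < n`, is Lebesgue-null. -/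
theorem stmt_1 (m n : ℕ) (hm : 0 < m) (hn : 0 < n) (hmn : m < n)
    {M : Type*} [TopologicalSpace M] [ChartedSpace (EuclideanSpace ℝ (Fin m)) M]
    [IsManifold (𝓡 m) (⊤ : ℕ∞) M] [SecondCountableTopology M]
    (f : M → EuclideanSpace ℝ (Fin n))
    (hf : ContMDiff (𝓡 m) (𝓡 n) 1 f) :
    volume (Set.range f) = 0 := by
  classical
  set H := EuclideanSpace ℝ (Fin m)
  -- Step 1: bound the Hausdorff dimension of the range by `m`.
  have hdim : dimH (Set.range f) ≤ (m : ℝ≥0∞) := by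
    obtain ⟨t, htc, htU⟩ := TopologicalSpace.isOpen_iUnion_countable
      (fun x : M => (chartAt H x).source) (fun x => (chartAt H x).open_source)
    have hcover : ⋃ x ∈ t, (chartAt H x).source = Set.univ := by
      rw [htU]
      exact Set.eq_univ_of_forall fun y => Set.mem_iUnion.2 ⟨y, mem_chart_source H y⟩
    have hrange : Set.range f = ⋃ x ∈ t, f '' (chartAt H x).source := by
      rw [← Set.image_univ, ← hcover, Set.image_iUnion₂]
    rw [hrange, dimH_bUnion htc]
    refine iSup₂_le fun x _ => ?_
    set e := chartAt H x with he
    have himg : f '' e.source = (f ∘ e.symm) '' e.target := by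
      rw [Set.image_comp, e.symm_image_target_eq_source]
    rw [himg]
    have hcd : ContDiffOn ℝ 1 (f ∘ e.symm) e.target := by
      have := (contMDiff_iff.1 hf).2 x (f x)
      simpa [he, chartAt_self_eq] using this.mono (by mfld_set_tac; simp [chartAt_self_eq])
    have hle : dimH ((f ∘ e.symm) '' e.target) ≤ dimH e.target := by
      apply dimH_image_le_of_locally_lipschitzOn
      intro y hy
      have hat : ContDiffAt ℝ 1 (f ∘ e.symm) y :=
        hcd.contDiffAt (e.open_target.mem_nhds hy)
      obtain ⟨C, u, hu, hlip⟩ := hat.exists_lipschitzOnWith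
      exact ⟨C, u, nhdsWithin_le_nhds hu, hlip⟩
    refine hle.trans ((dimH_mono (Set.subset_univ _)).trans ?_)
    rw [Real.dimH_univ_eq_finrank, finrank_euclideanSpace_fin]
  -- Step 2: the Hausdorff measure in the target dimension vanishes on the range.
  have hH : (μH[((Module.finrank ℝ (EuclideanSpace ℝ (Fin n)) : ℝ≥0) : ℝ)] :
      Measure (EuclideanSpace ℝ (Fin n))) (Set.range f) = 0 := by
    apply hausdorffMeasure_of_dimH_lt
    refine lt_of_le_of_lt hdim ?_
    rw [finrank_euclideanSpace_fin]
    exact_mod_cast hmn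
  have hH' : (μH[(Module.finrank ℝ (EuclideanSpace ℝ (Fin n)) : ℝ)] :
      Measure (EuclideanSpace ℝ (Fin n))) (Set.range f) = 0 := by
    have hc : ((Module.finrank ℝ (EuclideanSpace ℝ (Fin n)) : ℝ≥0) : ℝ)
        = (Module.finrank ℝ (EuclideanSpace ℝ (Fin n)) : ℝ) := by norm_cast
    rw [← hc]; exact hH
  -- Step 3: `volume` is a scalar multiple of `μH[n]` by Haar uniqueness.
  have hHaar := Measure.isAddLeftInvariant_eq_smul
    (volume : Measure (EuclideanSpace ℝ (Fin n)))
    (μH[Module.finrank ℝ (EuclideanSpace ℝ (Fin n))])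
  rw [hHaar, Measure.smul_apply, hH', smul_zero]
end
end

section
/- Let m < n be positive natural numbers, and let M be a second-countable smooth manifold of dimension m (modeled on EuclideanSpace ℝ (Fin m)). If there exists a smooth immersion f : M → S^n, i.e. a smooth (C^∞) map whose differential mfderiv is injective at every point of M, then there exists a smooth immersion g : M → EuclideanSpace ℝ (Fin n), i.e. a smooth map whose differential mfderiv is injective at every point of M. -/
open Metric Manifold Set MeasureTheory
open scoped ENNReal

noncomputable section

instance factFinrankEuclidean (n : ℕ) :
    Fact (Module.finrank ℝ (EuclideanSpace ℝ (Fin (n + 1))) = n + 1) :=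
  ⟨finrank_euclideanSpace_fin⟩

/-- The range of a smooth map from a second-countable `m`-manifold into a normed space
has Hausdorff dimension at most `m`. -/
theorem dimH_range_le_of_contMDiff (m : ℕ)
    {M : Type*} [TopologicalSpace M] [ChartedSpace (EuclideanSpace ℝ (Fin m)) M]
    [IsManifold (𝓡 m) (⊤ : ℕ∞) M] [SecondCountableTopology M]
    {E' : Type*} [NormedAddCommGroup E'] [NormedSpace ℝ E']
    {F : M → E'} (hF : ContMDiff (𝓡 m) 𝓘(ℝ, E') (⊤ : ℕ∞) F) :
    dimH (Set.range F) ≤ (m : ℝ≥0∞) := by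
  obtain ⟨c, hc, hcov⟩ := TopologicalSpace.countable_cover_nhds
    (f := fun x : M => (chartAt (EuclideanSpace ℝ (Fin m)) x).source)
    (fun x => (chartAt _ x).open_source.mem_nhds (mem_chart_source _ x))
  have hrange : Set.range F = ⋃ x ∈ c, F '' (chartAt (EuclideanSpace ℝ (Fin m)) x).source := by
    rw [← Set.image_univ, ← hcov, Set.image_iUnion₂]
  rw [hrange, dimH_bUnion hc]
  refine iSup₂_le fun x₀ _ => ?_
  set e := chartAt (EuclideanSpace ℝ (Fin m)) x₀ with he
  have himg : F '' e.source = (F ∘ e.symm) '' e.target := by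
    rw [Set.image_comp, e.symm_image_target_eq_source]
  have hsm : ContMDiffOn (𝓡 m) 𝓘(ℝ, E') (⊤ : ℕ∞) (F ∘ e.symm) e.target :=
    hF.comp_contMDiffOn (contMDiffOn_chart_symm (x := x₀))
  have hcd : ContDiffOn ℝ ((⊤ : ℕ∞) : WithTop ℕ∞) (F ∘ e.symm) e.target := hsm.contDiffOn
  calc dimH (F '' e.source) ≤ dimH e.target := by
        rw [himg]
        refine dimH_image_le_of_locally_lipschitzOn fun y hy => ?_
        have hct : ContDiffAt ℝ 1 (F ∘ e.symm) y :=
          ((hcd y hy).contDiffAt (e.open_target.mem_nhds hy)).of_le (by exact_mod_cast le_top)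
        obtain ⟨K, t, ht, hlip⟩ := hct.exists_lipschitzOnWith
        exact ⟨K, t, nhdsWithin_le_nhds ht, hlip⟩
    _ ≤ dimH (Set.univ : Set (EuclideanSpace ℝ (Fin m))) := dimH_mono (Set.subset_univ _)
    _ = (m : ℝ≥0∞) := by
        rw [Real.dimH_univ_eq_finrank, finrank_euclideanSpace_fin]

set_option maxHeartbeats 2000000 in
/-- If a second-countable smooth `m`-manifold (`m < n`) admits a smooth immersion into
the sphere `S^n`, then it admits a smooth immersion into `EuclideanSpace ℝ (Fin n)`. -/
theorem stmt_2 (m n : ℕ) (hm : 0 < m) (hn : 0 < n) (hmn : m < n)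
    {M : Type*} [TopologicalSpace M] [ChartedSpace (EuclideanSpace ℝ (Fin m)) M]
    [IsManifold (𝓡 m) (⊤ : ℕ∞) M] [SecondCountableTopology M]
    (h : ∃ f : M → sphere (0 : EuclideanSpace ℝ (Fin (n + 1))) 1,
      ContMDiff (𝓡 m) (𝓡 n) (⊤ : ℕ∞) f ∧
      ∀ x : M, Function.Injective (mfderiv (𝓡 m) (𝓡 n) f x)) :
    ∃ g : M → EuclideanSpace ℝ (Fin n),
      ContMDiff (𝓡 m) (𝓡 n) (⊤ : ℕ∞) g ∧
      ∀ x : M, Function.Injective (mfderiv (𝓡 m) (𝓡 n) g x) := by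
  obtain ⟨f, hf, hinj⟩ := h
  set E1 := EuclideanSpace ℝ (Fin (n + 1))
  -- the map into the ambient space
  have hFsm : ContMDiff (𝓡 m) 𝓘(ℝ, E1) (⊤ : ℕ∞) (fun x => (f x : E1)) :=
    contMDiff_coe_sphere.comp hf
  have hdim : dimH (Set.range fun x => (f x : E1)) ≤ (m : ℝ≥0∞) :=
    dimH_range_le_of_contMDiff m hFsm
  -- there is a point not in the range of `f`
  have hnonsurj : ∃ p : sphere (0 : E1) 1, p ∉ Set.range f := by
    by_contra hcon
    push_neg at hcon
    have hsub : (sphere (0 : E1) 1 : Set E1) ⊆ Set.range fun x => (f x : E1) := by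
      intro x hx
      obtain ⟨y, hy⟩ := hcon ⟨x, hx⟩
      exact ⟨y, by simp [hy]⟩
    -- fix a point of the sphere
    set v : sphere (0 : E1) 1 :=
      ⟨EuclideanSpace.single (0 : Fin (n + 1)) (1 : ℝ), by
        rw [mem_sphere_zero_iff_norm]
        exact (EuclideanSpace.norm_single 0 1).trans norm_one⟩ with hvdef
    -- the ambient stereographic projection
    set Φ : E1 → EuclideanSpace ℝ (Fin n) := fun x =>
      (OrthonormalBasis.fromOrthogonalSpanSingleton n
        (ne_zero_of_mem_unit_sphere v)).repr (stereoToFun (v : E1) x) with hΦdef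
    set U : Set E1 := {x : E1 | innerSL ℝ (v : E1) x ≠ (1 : ℝ)} with hUdef
    have hΦcd : ContDiffOn ℝ ((⊤ : ℕ∞) : WithTop ℕ∞) Φ U := by
      exact ((OrthonormalBasis.fromOrthogonalSpanSingleton n
        (ne_zero_of_mem_unit_sphere v)).repr.toContinuousLinearEquiv.contDiff.comp_contDiffOn
        contDiffOn_stereoToFun)
    set A : Set E1 := Subtype.val '' ({v}ᶜ : Set (sphere (0 : E1) 1)) with hAdef
    have hAU : A ⊆ U := by
      rintro x ⟨y, hy, rfl⟩
      intro hins
      apply hy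
      have : (v : E1) = (y : E1) :=
        (inner_eq_one_iff_of_norm_eq_one (norm_eq_of_mem_sphere v) (norm_eq_of_mem_sphere y)).mp hins
      exact Set.mem_singleton_iff.2 (Subtype.ext this.symm)
    have hΦchart : ∀ y : sphere (0 : E1) 1, Φ (y : E1) = stereographic' n v y := fun y => rfl
    have hΦA : Φ '' A = Set.univ := by
      have : Φ '' A = stereographic' n v '' ({v}ᶜ : Set (sphere (0 : E1) 1)) := by
        rw [hAdef, Set.image_image]
        exact Set.image_congr fun y _ => hΦchart y
      have h2 := (stereographic' n v).image_source_eq_target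
      rw [stereographic'_source, stereographic'_target] at h2
      rw [this, h2]
    have hn_le : (n : ℝ≥0∞) ≤ (m : ℝ≥0∞) := by
      calc (n : ℝ≥0∞) = dimH (Set.univ : Set (EuclideanSpace ℝ (Fin n))) := by
            rw [Real.dimH_univ_eq_finrank, finrank_euclideanSpace_fin]
        _ = dimH (Φ '' A) := by rw [hΦA]
        _ ≤ dimH A := by
            refine dimH_image_le_of_locally_lipschitzOn fun y hy => ?_
            have hU : IsOpen U := by
              exact isOpen_ne.preimage (innerSL ℝ (v : E1)).continuous
            have hct : ContDiffAt ℝ 1 Φ y :=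
              ((hΦcd y (hAU hy)).contDiffAt (hU.mem_nhds (hAU hy))).of_le
                (by exact_mod_cast le_top)
            obtain ⟨K, t, ht, hlip⟩ := hct.exists_lipschitzOnWith
            exact ⟨K, t, nhdsWithin_le_nhds ht, hlip⟩
        _ ≤ dimH (Set.range fun x => (f x : E1)) := by
            refine dimH_mono (fun x hx => ?_)
            obtain ⟨y, _, rfl⟩ := hx
            exact hsub y.2
        _ ≤ (m : ℝ≥0∞) := hdim
    exact absurd (Nat.cast_le.mp hn_le) (Nat.not_le.mpr hmn)
  obtain ⟨p, hp⟩ := hnonsurj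
  set c := stereographic' n p with hcdef
  have hatlas : c ∈ atlas (EuclideanSpace ℝ (Fin n)) (sphere (0 : E1) 1) := ⟨p, rfl⟩
  have hcmem : c ∈ IsManifold.maximalAtlas (𝓡 n) (⊤ : ℕ∞) (sphere (0 : E1) 1) :=
    IsManifold.subset_maximalAtlas hatlas
  have hcsm : ContMDiffOn (𝓡 n) (𝓡 n) (⊤ : ℕ∞) c c.source :=
    contMDiffOn_of_mem_maximalAtlas hcmem
  have hcsymm : ContMDiffOn (𝓡 n) (𝓡 n) (⊤ : ℕ∞) c.symm c.target :=
    contMDiffOn_symm_of_mem_maximalAtlas hcmem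
  have hfs : ∀ x, f x ∈ c.source := fun x => by
    rw [hcdef, stereographic'_source]
    exact fun hx => hp ⟨x, hx⟩
  have hgsm : ContMDiff (𝓡 m) (𝓡 n) (⊤ : ℕ∞) (c ∘ f) := hcsm.comp_contMDiff hf hfs
  refine ⟨c ∘ f, hgsm, fun x => ?_⟩
  have hgd : MDifferentiableAt (𝓡 m) (𝓡 n) (c ∘ f) x := hgsm.mdifferentiableAt (by simp)
  have hsd : MDifferentiableAt (𝓡 n) (𝓡 n) c.symm ((c ∘ f) x) := by
    refine (hcsymm.mdifferentiableOn (by simp)).mdifferentiableAt ?_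
    rw [hcdef, stereographic'_target]
    exact Filter.univ_mem
  have heq : f =ᶠ[nhds x] (c.symm ∘ (c ∘ f)) := by
    have hmem : f ⁻¹' c.source ∈ nhds x :=
      (c.open_source.preimage hf.continuous).mem_nhds (hfs x)
    exact Filter.eventuallyEq_of_mem hmem fun y hy => (c.left_inv hy).symm
  have hchain : mfderiv (𝓡 m) (𝓡 n) f x =
      (mfderiv (𝓡 n) (𝓡 n) c.symm ((c ∘ f) x)).comp (mfderiv (𝓡 m) (𝓡 n) (c ∘ f) x) := by
    rw [heq.mfderiv_eq]
    exact mfderiv_comp x hsd hgd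
  intro a b hab
  apply hinj x
  rw [hchain]
  exact congrArg (⇑(mfderiv (𝓡 n) (𝓡 n) c.symm ((c ∘ f) x))) hab
end
end
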